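/- Let B be an invertible symmetric real d×d matrix and let w ∈ ℝ^d satisfy (w,w) = wᵀBw > 0. Then the Gaussian Φ(x) = exp(−π·(w,x)²/(w,w)) satisfies Vignéras' equation with λ = −1: V_{−1} Φ = 0 on all of ℝ^d. -/

import Mathlib

noncomputable def pd {d : ℕ} (i : Fin d) (f : (Fin d → ℝ) → ℂ) : (Fin d → ℝ) → ℂ :=
  fun x => fderiv ℝ f x (Pi.single i 1)

noncomputable def Vop {d : ℕ} (B : Matrix (Fin d) (Fin d) ℝ) (lam : ℝ)
    (f : (Fin d → ℝ) → ℂ) : (Fin d → ℝ) → ℂ :=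
  fun x =>
    (∑ i, ∑ j, ((B⁻¹ i j : ℝ) : ℂ) * pd i (pd j f) x)
      + 2 * (Real.pi : ℂ) * ((∑ i, (x i : ℂ) * pd i f x) - (lam : ℂ) * f x)

/-- for invertible symmetric `B` and `w` with `(w,w) = wᵀBw > 0`, the
Gaussian `Φ(x) = exp(−π (w,x)²/(w,w))` satisfies Vignéras' equation with `λ = −1`. -/
theorem gaussian_solves_vigneras {d : ℕ} (hd : 1 ≤ d) (B : Matrix (Fin d) (Fin d) ℝ)
    (hsymm : B.IsSymm) (hinv : IsUnit B.det) (w : Fin d → ℝ)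
    (hw : 0 < ∑ i, ∑ j, w i * B i j * w j) :
    ∀ x : Fin d → ℝ,
      Vop B (-1) (fun y => (Complex.ofReal
        (Real.exp (-(Real.pi * (∑ i, ∑ j, w i * B i j * y j) ^ 2 /
          (∑ i, ∑ j, w i * B i j * w j)))))) x = 0 := by
  intro x
  set Q : ℝ := ∑ i, ∑ j, w i * B i j * w j with hQdef
  have hQ : Q ≠ 0 := ne_of_gt hw
  set c : Fin d → ℝ := fun j => ∑ i, w i * B i j with hcdef
  set L : (Fin d → ℝ) → ℝ := fun y => ∑ j, c j * y j with hLdef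
  have hLsum : ∀ y : Fin d → ℝ, (∑ i, ∑ j, w i * B i j * y j) = L y := by
    intro y
    rw [Finset.sum_comm]
    simp only [hLdef, hcdef, Finset.sum_mul]
  set K : ℝ := -(2 * Real.pi / Q) with hKdef
  set g : (Fin d → ℝ) → ℝ := fun y => -(Real.pi * (L y) ^ 2 / Q) with hgdef
  set f : (Fin d → ℝ) → ℂ := fun y => ((Real.exp (g y) : ℝ) : ℂ) with hfdef
  have hfun : (fun y : Fin d → ℝ => (Complex.ofReal
        (Real.exp (-(Real.pi * (∑ i, ∑ j, w i * B i j * y j) ^ 2 / Q))))) = f := by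
    funext y
    rw [hfdef, hLsum y, hgdef]
  rw [hfun]
  -- the derivative of L
  set L' : (Fin d → ℝ) →L[ℝ] ℝ :=
    ∑ j, c j • ContinuousLinearMap.proj (R := ℝ) (φ := fun _ : Fin d => ℝ) j with hL'def
  have hL'apply : ∀ v, L' v = ∑ j, c j * v j := by
    intro v
    simp [hL'def, ContinuousLinearMap.sum_apply]
  have hL'single : ∀ i, L' (Pi.single i 1) = c i := by
    intro i
    rw [hL'apply]
    simp [Pi.single_apply]
  have hLF : ∀ y, HasFDerivAt L L' y := by
    intro y
    have h : L = ⇑L' := by funext v; rw [hL'apply, hLdef]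
    rw [h]
    exact L'.hasFDerivAt
  have hgF : ∀ y, HasFDerivAt g ((K * L y) • L') y := by
    intro y
    have h1 : HasFDerivAt (fun z => -(Real.pi / Q) * (L z * L z))
        ((-(Real.pi / Q)) • (L y • L' + L y • L')) y :=
      HasFDerivAt.const_mul ((hLF y).mul (hLF y)) _
    have h2 : g = fun z => -(Real.pi / Q) * (L z * L z) := by
      funext z; simp only [hgdef]; ring
    have h3 : (K * L y) • L' = (-(Real.pi / Q)) • (L y • L' + L y • L') := by
      rw [← add_smul, smul_smul]
      congr 1
      rw [hKdef]; ring
    rw [h2, h3]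
    exact h1
  have hpd1 : ∀ i y, pd i f y = ((Real.exp (g y) * (K * L y) * c i : ℝ) : ℂ) := by
    intro i y
    have hexp : HasFDerivAt (fun z => Real.exp (g z)) (Real.exp (g y) • ((K * L y) • L')) y :=
      (Real.hasDerivAt_exp (g y)).comp_hasFDerivAt y (hgF y)
    have hC : HasFDerivAt f (Complex.ofRealCLM.comp (Real.exp (g y) • ((K * L y) • L'))) y :=
      Complex.ofRealCLM.hasFDerivAt.comp y hexp
    rw [pd, hC.fderiv]
    simp only [ContinuousLinearMap.comp_apply, ContinuousLinearMap.smul_apply, hL'single,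
      Complex.ofRealCLM_apply, smul_eq_mul]
    push_cast
    ring
  have hpd2 : ∀ i j, pd i (pd j f) x
      = ((Real.exp (g x) * K * (1 + K * (L x) ^ 2) * (c i * c j) : ℝ) : ℂ) := by
    intro i j
    have hEq : pd j f = fun y => ((Real.exp (g y) * (K * L y) * c j : ℝ) : ℂ) := by
      funext y; exact hpd1 j y
    have hu : HasFDerivAt (fun y => Real.exp (g y)) (Real.exp (g x) • ((K * L x) • L')) x :=
      (Real.hasDerivAt_exp (g x)).comp_hasFDerivAt x (hgF x)
    have hv : HasFDerivAt (fun y => K * L y) (K • L') x := (hLF x).const_mul K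
    have hE : HasFDerivAt (fun y => Real.exp (g y) * (K * L y) * c j)
        (c j • (Real.exp (g x) • (K • L') + (K * L x) • (Real.exp (g x) • ((K * L x) • L')))) x :=
      (hu.mul hv).mul_const (c j)
    have hC : HasFDerivAt (fun y => ((Real.exp (g y) * (K * L y) * c j : ℝ) : ℂ))
        (Complex.ofRealCLM.comp
          (c j • (Real.exp (g x) • (K • L') + (K * L x) • (Real.exp (g x) • ((K * L x) • L'))))) x :=
      Complex.ofRealCLM.hasFDerivAt.comp x hE
    rw [pd, hEq, hC.fderiv]
    simp only [ContinuousLinearMap.comp_apply, ContinuousLinearMap.smul_apply,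
      ContinuousLinearMap.add_apply, hL'single, Complex.ofRealCLM_apply, smul_eq_mul]
    push_cast
    ring
  -- matrix identities
  have hBsymm : ∀ i j, B j i = B i j := by
    intro i j
    have h := congrFun (congrFun hsymm i) j
    simpa [Matrix.transpose_apply] using h
  have hcB : c = B.mulVec w := by
    funext j
    simp only [hcdef, Matrix.mulVec, dotProduct]
    refine Finset.sum_congr rfl fun i _ => ?_
    show w i * B i j = B j i * w i
    rw [hBsymm i j]; ring
  have hBinvc : ∀ i, (∑ j, B⁻¹ i j * c j) = w i := by
    intro i
    have hmv : B⁻¹.mulVec c = w := by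
      rw [hcB, Matrix.mulVec_mulVec, Matrix.nonsing_inv_mul B hinv, Matrix.one_mulVec]
    have h := congrFun hmv i
    simpa [Matrix.mulVec, dotProduct] using h
  have hcw : (∑ i, c i * w i) = Q := by
    rw [hQdef, Finset.sum_comm]
    exact Finset.sum_congr rfl fun j _ => by rw [hcdef]; rw [Finset.sum_mul]
  have hS : (∑ i, ∑ j, B⁻¹ i j * (c i * c j)) = Q := by
    calc (∑ i, ∑ j, B⁻¹ i j * (c i * c j))
        = ∑ i, c i * ∑ j, B⁻¹ i j * c j := by
          refine Finset.sum_congr rfl fun i _ => ?_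
          rw [Finset.mul_sum]
          exact Finset.sum_congr rfl fun j _ => by ring
      _ = ∑ i, c i * w i := Finset.sum_congr rfl fun i _ => by rw [hBinvc i]
      _ = Q := hcw
  have hxc : (∑ i, x i * c i) = L x := by
    rw [hLdef]
    exact Finset.sum_congr rfl fun i _ => by ring
  -- final computation
  simp only [Vop]
  simp only [hpd2, hpd1]
  simp only [hfdef]
  simp only [← Complex.ofReal_mul, ← Complex.ofReal_sum, ← Complex.ofReal_ofNat,
    ← Complex.ofReal_neg, ← Complex.ofReal_one, ← Complex.ofReal_sub, ← Complex.ofReal_add]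
  rw [Complex.ofReal_eq_zero]
  have r1 : (∑ i, ∑ j, B⁻¹ i j * (Real.exp (g x) * K * (1 + K * (L x) ^ 2) * (c i * c j)))
      = (Real.exp (g x) * K * (1 + K * (L x) ^ 2)) * Q := by
    rw [← hS, Finset.mul_sum]
    refine Finset.sum_congr rfl fun i _ => ?_
    rw [Finset.mul_sum]
    exact Finset.sum_congr rfl fun j _ => by ring
  have r2 : (∑ i, x i * (Real.exp (g x) * (K * L x) * c i))
      = (Real.exp (g x) * (K * L x)) * L x := by
    calc (∑ i, x i * (Real.exp (g x) * (K * L x) * c i))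
        = (Real.exp (g x) * (K * L x)) * ∑ i, x i * c i := by
          rw [Finset.mul_sum (Finset.univ) (fun i => x i * c i) (Real.exp (g x) * (K * L x))]
          exact Finset.sum_congr rfl fun i _ => by ring
      _ = (Real.exp (g x) * (K * L x)) * L x := by rw [hxc]
  rw [r1, r2, hKdef]
  field_simp
  ring
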